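/- Set g₀ := −f and assume (†): for each i = 1,…,n exactly one of the coefficients (g₀)_{d,i}, (g₁)_{d,i}, …, (g_m)_{d,i} is strictly negative. Let A := I, the identity matrix of size m+1 (so h_k = g_k for k = 0,…,m). Then f^I_{gp,g} ≤ s₀(f,g) := sup{G(λ)_gp : λ ∈ (0,∞)^m} (as elements of ℝ ∪ {±∞}). -/
import Mathlib


open MvPolynomial Finset

noncomputable section

/-- `Finset.filter` with classical decidability. -/
def pfilter {β : Type*} (s : Finset β) (q : β → Prop) : Finset β :=
  @Finset.filter β q (fun _ => Classical.propDecidable _) s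

/-- `|α| := α₁ + ⋯ + αₙ` for a multi-index `α`. -/
def adeg {n : ℕ} (α : Fin n →₀ ℕ) : ℕ := ∑ i, α i

/-- `Ω(p) := {α : |α| ≤ d, p_α ≠ 0, α ∉ {0, ε₁, …, εₙ}}`. -/
def OmegaSet {n : ℕ} (d : ℕ) (p : MvPolynomial (Fin n) ℝ) : Finset (Fin n →₀ ℕ) :=
  pfilter p.support (fun α => adeg α ≤ d ∧ α ≠ 0 ∧ ∀ i, α ≠ Finsupp.single i d)

/-- `Δ(p) := {α ∈ Ω(p) : p_α x^α is not a square}`. -/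
def DelSet {n : ℕ} (d : ℕ) (p : MvPolynomial (Fin n) ℝ) : Finset (Fin n →₀ ℕ) :=
  pfilter (OmegaSet d p)
    (fun α => ¬ IsSquare ((monomial α (p.coeff α)) : MvPolynomial (Fin n) ℝ))

/-- Feasibility for program (lw) for `p`. -/
def LwFeas {n : ℕ} (d : ℕ) (p : MvPolynomial (Fin n) ℝ)
    (z : (Fin n →₀ ℕ) → Fin n → ℝ) : Prop :=
  (∀ α ∈ DelSet d p, ∀ i, 0 ≤ z α i ∧ (z α i = 0 ↔ α i = 0)) ∧
  (∀ i, ∑ α ∈ DelSet d p, z α i ≤ p.coeff (Finsupp.single i d)) ∧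
  (∀ α ∈ DelSet d p, adeg α = d →
    ∏ i, (z α i / (α i : ℝ)) ^ (α i) = (p.coeff α / (d : ℝ)) ^ d)

/-- The objective function `v` of program (lw). -/
def lwObj {n : ℕ} (d : ℕ) (p : MvPolynomial (Fin n) ℝ)
    (z : (Fin n →₀ ℕ) → Fin n → ℝ) : ℝ :=
  ∑ α ∈ pfilter (DelSet d p) (fun α => adeg α < d),
    ((d : ℝ) - (adeg α : ℝ)) *
      (((p.coeff α / (d : ℝ)) ^ d * ∏ i, ((α i : ℝ) / z α i) ^ (α i)) ^
        ((1 : ℝ) / ((d : ℝ) - (adeg α : ℝ))))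

/-- `ρ(p) ∈ [0,∞]`, the infimum of `v` over the feasible set (`⊤` if infeasible). -/
def lwRho {n : ℕ} (d : ℕ) (p : MvPolynomial (Fin n) ℝ) : EReal :=
  sInf ((fun z => ((lwObj d p z : ℝ) : EReal)) '' {z | LwFeas d p z})

/-- `p_gp := p(0) − ρ(p) ∈ ℝ ∪ {−∞}`. -/
def lwGp {n : ℕ} (d : ℕ) (p : MvPolynomial (Fin n) ℝ) : EReal :=
  ((eval (0 : Fin n → ℝ) p : ℝ) : EReal) - lwRho d p

/-- `G(λ) := f − ∑ⱼ λⱼ gⱼ`. -/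
def polyG {n m : ℕ} (f : MvPolynomial (Fin n) ℝ) (g : Fin m → MvPolynomial (Fin n) ℝ)
    (lam : Fin m → ℝ) : MvPolynomial (Fin n) ℝ :=
  f - ∑ j, C (lam j) * g j

/-- `s(f,g) := sup{G(λ)_gp : λ ∈ [0,∞)^m}`. -/
def sBound {n m : ℕ} (d : ℕ) (f : MvPolynomial (Fin n) ℝ)
    (g : Fin m → MvPolynomial (Fin n) ℝ) : EReal :=
  sSup ((fun lam => lwGp d (polyG f g lam)) '' {lam : Fin m → ℝ | ∀ j, 0 ≤ lam j})


/-- `h_k := ∑_{j=0}^m a_{jk} g_j` for `gext = (g₀, g₁, …, g_m)` with `g₀ = −f`. -/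
def hpoly {n m : ℕ} (gext : Fin (m+1) → MvPolynomial (Fin n) ℝ)
    (A : Fin (m+1) → Fin (m+1) → ℝ) (k : Fin (m+1)) : MvPolynomial (Fin n) ℝ :=
  ∑ j, C (A j k) * gext j

/-- `μ` extended by `μ₀ := 1`. -/
def muExt {m : ℕ} (mu : Fin m → ℝ) : Fin (m+1) → ℝ := Fin.cons 1 mu

/-- `H(μ) := −∑_{k=0}^m μ_k h_k`. -/
def Hpoly {n m : ℕ} (gext : Fin (m+1) → MvPolynomial (Fin n) ℝ)
    (A : Fin (m+1) → Fin (m+1) → ℝ) (mu : Fin m → ℝ) : MvPolynomial (Fin n) ℝ :=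
  - ∑ k, C (muExt mu k) * hpoly gext A k

/-- `H(μ)_α^+ := −∑_{j : (h_j)_α < 0} (h_j)_α μ_j`. -/
def Hplus {n m : ℕ} (gext : Fin (m+1) → MvPolynomial (Fin n) ℝ)
    (A : Fin (m+1) → Fin (m+1) → ℝ) (mu : Fin m → ℝ) (α : Fin n →₀ ℕ) : ℝ :=
  ∑ j, if (hpoly gext A j).coeff α < 0 then -((hpoly gext A j).coeff α * muExt mu j) else 0

/-- `H(μ)_α^− := ∑_{j : (h_j)_α > 0} (h_j)_α μ_j`. -/
def Hminus {n m : ℕ} (gext : Fin (m+1) → MvPolynomial (Fin n) ℝ)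
    (A : Fin (m+1) → Fin (m+1) → ℝ) (mu : Fin m → ℝ) (α : Fin n →₀ ℕ) : ℝ :=
  ∑ j, if 0 < (hpoly gext A j).coeff α then (hpoly gext A j).coeff α * muExt mu j else 0

/-- `Δ := Δ(f) ∪ Δ(−g₁) ∪ ⋯ ∪ Δ(−g_m)` (note `−g₀ = f`). -/
def DelTot2 {n m : ℕ} (d : ℕ) (gext : Fin (m+1) → MvPolynomial (Fin n) ℝ) :
    Finset (Fin n →₀ ℕ) :=
  Finset.univ.biUnion (fun j : Fin (m+1) => DelSet d (-(gext j)))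

/-- Feasibility for program (lw2). -/
def Lw2Feas {n m : ℕ} (d : ℕ) (gext : Fin (m+1) → MvPolynomial (Fin n) ℝ)
    (A : Fin (m+1) → Fin (m+1) → ℝ)
    (z : (Fin n →₀ ℕ) → Fin n → ℝ) (w : (Fin n →₀ ℕ) → ℝ) (mu : Fin m → ℝ) : Prop :=
  (∀ j, 0 < mu j) ∧
  (∀ α ∈ DelTot2 d gext, ∀ i, 0 ≤ z α i ∧ (z α i = 0 ↔ α i = 0)) ∧
  (∀ α ∈ DelTot2 d gext, 0 < w α) ∧
  (∀ i, ∑ α ∈ DelTot2 d gext, z α i ≤ (Hpoly gext A mu).coeff (Finsupp.single i d)) ∧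
  (∀ α ∈ DelTot2 d gext, adeg α = d →
    (w α / (d : ℝ)) ^ d ≤ ∏ i, (z α i / (α i : ℝ)) ^ (α i)) ∧
  (∀ α ∈ DelTot2 d gext, max (Hplus gext A mu α) (Hminus gext A mu α) ≤ w α) ∧
  (∀ j : Fin (m+1), j ≠ 0 → 0 ≤ ∑ k, A j k * muExt mu k)

/-- The objective function `t` of program (lw2). -/
def lw2Obj {n m : ℕ} (d : ℕ) (gext : Fin (m+1) → MvPolynomial (Fin n) ℝ)
    (A : Fin (m+1) → Fin (m+1) → ℝ)
    (z : (Fin n →₀ ℕ) → Fin n → ℝ) (w : (Fin n →₀ ℕ) → ℝ) (mu : Fin m → ℝ) : ℝ :=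
  (∑ j : Fin m, mu j * max (eval (0 : Fin n → ℝ) (hpoly gext A j.succ)) 0) +
  ∑ α ∈ pfilter (DelTot2 d gext) (fun α => adeg α < d),
    ((d : ℝ) - (adeg α : ℝ)) *
      (((w α / (d : ℝ)) ^ d * ∏ i, ((α i : ℝ) / z α i) ^ (α i)) ^
        ((1 : ℝ) / ((d : ℝ) - (adeg α : ℝ))))

/-- `ρ_A ∈ [0,∞]`, the optimal value of program (lw2) (`⊤` if infeasible). -/
def rhoA {n m : ℕ} (d : ℕ) (gext : Fin (m+1) → MvPolynomial (Fin n) ℝ)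
    (A : Fin (m+1) → Fin (m+1) → ℝ) : EReal :=
  sInf ((fun t : ((Fin n →₀ ℕ) → Fin n → ℝ) × ((Fin n →₀ ℕ) → ℝ) × (Fin m → ℝ) =>
      ((lw2Obj d gext A t.1 t.2.1 t.2.2 : ℝ) : EReal)) ''
    {t | Lw2Feas d gext A t.1 t.2.1 t.2.2})

/-- `f^A_{gp,g} := −h₀(0) − ρ_A ∈ ℝ ∪ {−∞}`. -/
def fAgp {n m : ℕ} (d : ℕ) (gext : Fin (m+1) → MvPolynomial (Fin n) ℝ)
    (A : Fin (m+1) → Fin (m+1) → ℝ) : EReal :=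
  ((-(eval (0 : Fin n → ℝ) (hpoly gext A 0)) : ℝ) : EReal) - rhoA d gext A


/-! ### Auxiliary lemmas -/

lemma mem_pfilter {β : Type*} {s : Finset β} {q : β → Prop} {a : β} :
    a ∈ pfilter s q ↔ a ∈ s ∧ q a := by
  classical
  simp [pfilter, Finset.mem_filter]

lemma hpoly_id {n m : ℕ} (gext : Fin (m+1) → MvPolynomial (Fin n) ℝ)
    {A : Fin (m+1) → Fin (m+1) → ℝ} (hA : A = fun j k => if j = k then 1 else 0)
    (k : Fin (m+1)) : hpoly gext A k = gext k := by
  subst hA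
  unfold hpoly
  rw [Finset.sum_eq_single k]
  · simp
  · intro j _ hj; simp [hj]
  · simp

lemma muExt_pos {m : ℕ} {mu : Fin m → ℝ} (hmu : ∀ j, 0 < mu j) (k : Fin (m+1)) :
    0 < muExt mu k := by
  refine Fin.cases ?_ ?_ k
  · simp [muExt]
  · intro j; simpa [muExt] using hmu j

lemma coeff_polyG {n m : ℕ} (f : MvPolynomial (Fin n) ℝ)
    (g : Fin m → MvPolynomial (Fin n) ℝ) (mu : Fin m → ℝ) (α : Fin n →₀ ℕ) :
    (polyG f g mu).coeff α = f.coeff α - ∑ j, mu j * (g j).coeff α := by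
  simp [polyG, MvPolynomial.coeff_sub, MvPolynomial.coeff_sum, MvPolynomial.coeff_C_mul]

lemma coeff_polyG' {n m : ℕ} {f : MvPolynomial (Fin n) ℝ}
    {g : Fin m → MvPolynomial (Fin n) ℝ}
    {gext : Fin (m+1) → MvPolynomial (Fin n) ℝ} (hgext : gext = Fin.cons (-f) g)
    (mu : Fin m → ℝ) (α : Fin n →₀ ℕ) :
    (polyG f g mu).coeff α = -∑ k, muExt mu k * (gext k).coeff α := by
  rw [coeff_polyG, Fin.sum_univ_succ]
  subst hgext
  simp [muExt]
  ring

lemma Hpoly_eq {n m : ℕ} {f : MvPolynomial (Fin n) ℝ}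
    {g : Fin m → MvPolynomial (Fin n) ℝ}
    {gext : Fin (m+1) → MvPolynomial (Fin n) ℝ} (hgext : gext = Fin.cons (-f) g)
    {A : Fin (m+1) → Fin (m+1) → ℝ} (hA : A = fun j k => if j = k then 1 else 0)
    (mu : Fin m → ℝ) : Hpoly gext A mu = polyG f g mu := by
  unfold Hpoly polyG
  rw [Fin.sum_univ_succ]
  simp only [hpoly_id gext hA]
  subst hgext
  simp [muExt]
  ring

lemma Hdiff {n m : ℕ} {f : MvPolynomial (Fin n) ℝ}
    {g : Fin m → MvPolynomial (Fin n) ℝ}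
    {gext : Fin (m+1) → MvPolynomial (Fin n) ℝ} (hgext : gext = Fin.cons (-f) g)
    {A : Fin (m+1) → Fin (m+1) → ℝ} (hA : A = fun j k => if j = k then 1 else 0)
    (mu : Fin m → ℝ) (α : Fin n →₀ ℕ) :
    Hplus gext A mu α - Hminus gext A mu α = (polyG f g mu).coeff α := by
  have hterm : ∀ j : Fin (m+1),
      (if (hpoly gext A j).coeff α < 0 then -((hpoly gext A j).coeff α * muExt mu j) else 0)
        - (if 0 < (hpoly gext A j).coeff α then (hpoly gext A j).coeff α * muExt mu j else 0)
        = -(muExt mu j * (gext j).coeff α) := by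
    intro j
    rw [hpoly_id gext hA]
    rcases lt_trichotomy ((gext j).coeff α) 0 with h | h | h
    · rw [if_pos h, if_neg (by linarith)]; ring
    · simp [h]
    · rw [if_neg (by linarith), if_pos h]; ring
  rw [coeff_polyG' hgext, Hplus, Hminus, ← Finset.sum_sub_distrib,
    Finset.sum_congr rfl (fun j _ => hterm j), Finset.sum_neg_distrib]

lemma Hplus_nonneg {n m : ℕ} {gext : Fin (m+1) → MvPolynomial (Fin n) ℝ}
    {A : Fin (m+1) → Fin (m+1) → ℝ} {mu : Fin m → ℝ} (hmu : ∀ j, 0 < mu j)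
    (α : Fin n →₀ ℕ) : 0 ≤ Hplus gext A mu α := by
  apply Finset.sum_nonneg
  intro j _
  by_cases h : (hpoly gext A j).coeff α < 0
  · rw [if_pos h]
    nlinarith [muExt_pos hmu j]
  · rw [if_neg h]

lemma Hminus_nonneg {n m : ℕ} {gext : Fin (m+1) → MvPolynomial (Fin n) ℝ}
    {A : Fin (m+1) → Fin (m+1) → ℝ} {mu : Fin m → ℝ} (hmu : ∀ j, 0 < mu j)
    (α : Fin n →₀ ℕ) : 0 ≤ Hminus gext A mu α := by
  apply Finset.sum_nonneg
  intro j _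
  by_cases h : 0 < (hpoly gext A j).coeff α
  · rw [if_pos h]
    nlinarith [muExt_pos hmu j]
  · rw [if_neg h]

lemma DelSet_subset {n m : ℕ} {d : ℕ} {f : MvPolynomial (Fin n) ℝ}
    {g : Fin m → MvPolynomial (Fin n) ℝ}
    {gext : Fin (m+1) → MvPolynomial (Fin n) ℝ} (hgext : gext = Fin.cons (-f) g)
    (hO : ∀ j, OmegaSet d (-(gext j)) = DelSet d (-(gext j))) (mu : Fin m → ℝ) :
    DelSet d (polyG f g mu) ⊆ DelTot2 d gext := by
  intro α hα
  rw [DelSet, mem_pfilter] at hα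
  obtain ⟨hΩ, -⟩ := hα
  rw [OmegaSet, mem_pfilter, MvPolynomial.mem_support_iff] at hΩ
  obtain ⟨hne, hdeg, h0, hsing⟩ := hΩ
  have hex : ∃ k, (gext k).coeff α ≠ 0 := by
    by_contra h
    push_neg at h
    apply hne
    rw [coeff_polyG' hgext]
    simp [h]
  obtain ⟨k, hk⟩ := hex
  rw [DelTot2, Finset.mem_biUnion]
  refine ⟨k, Finset.mem_univ k, ?_⟩
  rw [← hO k, OmegaSet, mem_pfilter, MvPolynomial.mem_support_iff]
  exact ⟨by simpa using hk, hdeg, h0, hsing⟩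

/-- The key lemma: every feasible point of (lw2) gives a value below `G(μ)_gp`. -/
lemma key_lemma {n m : ℕ} {d : ℕ} (hd2 : 2 ≤ d) (hde : Even d)
    {f : MvPolynomial (Fin n) ℝ} {g : Fin m → MvPolynomial (Fin n) ℝ}
    {gext : Fin (m+1) → MvPolynomial (Fin n) ℝ} (hgext : gext = Fin.cons (-f) g)
    (hO : ∀ j, OmegaSet d (-(gext j)) = DelSet d (-(gext j)))
    {A : Fin (m+1) → Fin (m+1) → ℝ} (hA : A = fun j k => if j = k then 1 else 0)
    (z : (Fin n →₀ ℕ) → Fin n → ℝ) (w : (Fin n →₀ ℕ) → ℝ) (mu : Fin m → ℝ)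
    (hfeas : Lw2Feas d gext A z w mu) :
    ((eval (0 : Fin n → ℝ) f - lw2Obj d gext A z w mu : ℝ) : EReal) ≤
      lwGp d (polyG f g mu) := by
  obtain ⟨hmu, hz, hw, hsum, hdeq, hwmax, -⟩ := hfeas
  set p := polyG f g mu with hp
  have hd0 : (0:ℝ) < (d:ℝ) := by
    have h : 0 < d := by omega
    exact_mod_cast h
  have hsubset : DelSet d p ⊆ DelTot2 d gext := DelSet_subset hgext hO mu
  have habs : ∀ α ∈ DelTot2 d gext, |p.coeff α| ≤ w α := by
    intro α hα
    have h1 := Hplus_nonneg (gext := gext) (A := A) hmu α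
    have h2 := Hminus_nonneg (gext := gext) (A := A) hmu α
    have h3 := hwmax α hα
    have h4 := Hdiff hgext hA mu α
    have h5 := le_max_left (Hplus gext A mu α) (Hminus gext A mu α)
    have h6 := le_max_right (Hplus gext A mu α) (Hminus gext A mu α)
    rw [abs_le]
    constructor
    · linarith
    · linarith
  have hmemD : ∀ α ∈ DelSet d p, p.coeff α ≠ 0 := by
    intro α hα
    rw [DelSet, mem_pfilter, OmegaSet, mem_pfilter, MvPolynomial.mem_support_iff] at hα
    exact hα.1.1
  have hcoefle : ∀ α ∈ DelTot2 d gext, (p.coeff α / (d:ℝ)) ^ d ≤ (w α / (d:ℝ)) ^ d := by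
    intro α hα
    have habs' : |p.coeff α / (d:ℝ)| ≤ w α / (d:ℝ) := by
      rw [abs_div, abs_of_pos hd0]
      exact div_le_div_of_nonneg_right (habs α hα) hd0.le
    calc (p.coeff α / (d:ℝ)) ^ d = |p.coeff α / (d:ℝ)| ^ d := (hde.pow_abs _).symm
      _ ≤ (w α / (d:ℝ)) ^ d := pow_le_pow_left₀ (abs_nonneg _) habs' d
  set P : (Fin n →₀ ℕ) → ℝ := fun α => ∏ i, (z α i / (α i : ℝ)) ^ (α i) with hPdef
  have hPpos : ∀ α ∈ DelTot2 d gext, 0 < P α := by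
    intro α hα
    apply Finset.prod_pos
    intro i _
    rcases Nat.eq_zero_or_pos (α i) with h | h
    · simp [h]
    · have hzpos : 0 < z α i := by
        rcases hz α hα i with ⟨h1, h2⟩
        rcases h1.lt_or_eq with h3 | h3
        · exact h3
        · exact absurd (h2.mp h3.symm) (by omega)
      exact pow_pos (div_pos hzpos (by exact_mod_cast h)) _
  set c : (Fin n →₀ ℕ) → ℝ :=
    fun α => (((p.coeff α / (d:ℝ)) ^ d) / P α) ^ ((d:ℝ)⁻¹) with hcdef
  have hXpos : ∀ α ∈ DelSet d p, 0 < (p.coeff α / (d:ℝ)) ^ d := by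
    intro α hα
    exact hde.pow_pos (div_ne_zero (hmemD α hα) (ne_of_gt hd0))
  have hcpos : ∀ α ∈ DelSet d p, 0 < c α := by
    intro α hα
    exact Real.rpow_pos_of_pos (div_pos (hXpos α hα) (hPpos α (hsubset hα))) _
  have hcle1 : ∀ α ∈ DelSet d p, adeg α = d → c α ≤ 1 := by
    intro α hα hdg
    apply Real.rpow_le_one (le_of_lt (div_pos (hXpos α hα) (hPpos α (hsubset hα))))
      ?_ (by positivity)
    rw [div_le_one (hPpos α (hsubset hα))]
    calc (p.coeff α / (d:ℝ)) ^ d ≤ (w α / (d:ℝ)) ^ d := hcoefle α (hsubset hα)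
      _ ≤ P α := hdeq α (hsubset hα) hdg
  set z' : (Fin n →₀ ℕ) → Fin n → ℝ :=
    fun α i => if adeg α = d then c α * z α i else z α i with hz'def
  have hfeas' : LwFeas d p z' := by
    refine ⟨?_, ?_, ?_⟩
    · intro α hα i
      have hz1 := hz α (hsubset hα) i
      by_cases hdg : adeg α = d
      · simp only [hz'def, if_pos hdg]
        have hcp := hcpos α hα
        refine ⟨mul_nonneg hcp.le hz1.1, ?_⟩
        rw [mul_eq_zero]
        constructor
        · rintro (h | h)
          · exact absurd h (ne_of_gt hcp)
          · exact hz1.2.mp h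
        · intro h
          exact Or.inr (hz1.2.mpr h)
      · simpa [hz'def, hdg] using hz1
    · intro i
      have hle : ∀ α ∈ DelSet d p, z' α i ≤ z α i := by
        intro α hα
        by_cases hdg : adeg α = d
        · simp only [hz'def, if_pos hdg]
          have h1 := (hz α (hsubset hα) i).1
          nlinarith [hcle1 α hα hdg, hcpos α hα]
        · simp [hz'def, hdg]
      calc ∑ α ∈ DelSet d p, z' α i ≤ ∑ α ∈ DelSet d p, z α i := Finset.sum_le_sum hle
        _ ≤ ∑ α ∈ DelTot2 d gext, z α i :=
            Finset.sum_le_sum_of_subset_of_nonneg hsubset (fun α hα _ => (hz α hα i).1)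
        _ ≤ (Hpoly gext A mu).coeff (Finsupp.single i d) := hsum i
        _ = p.coeff (Finsupp.single i d) := by rw [Hpoly_eq hgext hA]
    · intro α hα hdg
      have hProd : ∏ i, (z' α i / (α i : ℝ)) ^ (α i) = c α ^ d * P α := by
        have hfac : ∀ i : Fin n, (z' α i / (α i : ℝ)) ^ (α i)
            = c α ^ (α i) * (z α i / (α i : ℝ)) ^ (α i) := by
          intro i
          simp only [hz'def, if_pos hdg]
          rw [mul_div_assoc, mul_pow]
        rw [Finset.prod_congr rfl (fun i _ => hfac i), Finset.prod_mul_distrib,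
          Finset.prod_pow_eq_pow_sum]
        have hsd : ∑ i, α i = d := hdg
        rw [hsd]
      rw [hProd]
      have hb : (0:ℝ) ≤ ((p.coeff α / (d:ℝ)) ^ d) / P α :=
        (div_pos (hXpos α hα) (hPpos α (hsubset hα))).le
      have hcd : c α ^ d = (p.coeff α / (d:ℝ)) ^ d / P α := by
        rw [hcdef]
        rw [← Real.rpow_natCast ((((p.coeff α / (d:ℝ)) ^ d) / P α) ^ ((d:ℝ)⁻¹)) d,
          ← Real.rpow_mul hb, inv_mul_cancel₀ (ne_of_gt hd0), Real.rpow_one]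
      rw [hcd, div_mul_cancel₀ _ (ne_of_gt (hPpos α (hsubset hα)))]
  have hobj : lwObj d p z' ≤
      ∑ α ∈ pfilter (DelTot2 d gext) (fun α => adeg α < d),
        ((d : ℝ) - (adeg α : ℝ)) *
          (((w α / (d : ℝ)) ^ d * ∏ i, ((α i : ℝ) / z α i) ^ (α i)) ^
            ((1 : ℝ) / ((d : ℝ) - (adeg α : ℝ)))) := by
    unfold lwObj
    refine le_trans (Finset.sum_le_sum ?_) (Finset.sum_le_sum_of_subset_of_nonneg ?_ ?_)
    · intro α hα
      rw [mem_pfilter] at hα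
      obtain ⟨hαD, hαlt⟩ := hα
      have hzz : ∀ i, z' α i = z α i := by
        intro i; simp [hz'def, Nat.ne_of_lt hαlt]
      simp only [hzz]
      have hQ : 0 ≤ ∏ i, ((α i : ℝ) / z α i) ^ (α i) :=
        Finset.prod_nonneg (fun i _ =>
          pow_nonneg (div_nonneg (Nat.cast_nonneg _) ((hz α (hsubset hαD) i).1)) _)
      have hdk : (0:ℝ) ≤ (d : ℝ) - (adeg α : ℝ) := by
        have hle : (adeg α : ℝ) ≤ (d : ℝ) := by exact_mod_cast hαlt.le
        linarith
      apply mul_le_mul_of_nonneg_left ?_ hdk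
      apply Real.rpow_le_rpow (mul_nonneg (hde.pow_nonneg _) hQ)
        (mul_le_mul_of_nonneg_right (hcoefle α (hsubset hαD)) hQ) (by positivity)
    · intro α hα
      rw [mem_pfilter] at hα ⊢
      exact ⟨hsubset hα.1, hα.2⟩
    · intro α hα _
      rw [mem_pfilter] at hα
      have hQ : 0 ≤ ∏ i, ((α i : ℝ) / z α i) ^ (α i) :=
        Finset.prod_nonneg (fun i _ =>
          pow_nonneg (div_nonneg (Nat.cast_nonneg _) ((hz α hα.1 i).1)) _)
      have hdk : (0:ℝ) ≤ (d : ℝ) - (adeg α : ℝ) := by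
        have hle : (adeg α : ℝ) ≤ (d : ℝ) := by exact_mod_cast hα.2.le
        linarith
      exact mul_nonneg hdk (Real.rpow_nonneg (mul_nonneg (hde.pow_nonneg _) hQ) _)
  have hrho : lwRho d p ≤ ((lwObj d p z' : ℝ) : EReal) := sInf_le ⟨z', hfeas', rfl⟩
  have he0 : eval (0 : Fin n → ℝ) p
      = eval (0 : Fin n → ℝ) f - ∑ j, mu j * eval (0 : Fin n → ℝ) (g j) := by
    simp [hp, polyG, map_sum]
  have hsum1 : ∑ j, mu j * eval (0 : Fin n → ℝ) (g j)
      ≤ ∑ j : Fin m, mu j * max (eval (0 : Fin n → ℝ) (hpoly gext A j.succ)) 0 := by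
    apply Finset.sum_le_sum
    intro j _
    rw [hpoly_id gext hA, hgext, Fin.cons_succ]
    exact mul_le_mul_of_nonneg_left (le_max_left _ _) (hmu j).le
  rw [lwGp]
  calc ((eval (0 : Fin n → ℝ) f - lw2Obj d gext A z w mu : ℝ) : EReal)
      ≤ ((eval (0 : Fin n → ℝ) p - lwObj d p z' : ℝ) : EReal) := by
        rw [EReal.coe_le_coe_iff, he0]
        simp only [lw2Obj]
        linarith [hobj, hsum1]
    _ = ((eval (0 : Fin n → ℝ) p : ℝ) : EReal) - ((lwObj d p z' : ℝ) : EReal) :=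
        EReal.coe_sub _ _
    _ ≤ ((eval (0 : Fin n → ℝ) p : ℝ) : EReal) - lwRho d p :=
        EReal.sub_le_sub (le_refl _) hrho

/-- Theorem (A = I, part 2): under (†), `f^I_{gp,g} ≤ s₀(f,g) = sup{G(λ)_gp : λ ∈ (0,∞)^m}`. -/
theorem stmt12 {n m : ℕ} (hn : 1 ≤ n) (d : ℕ)
    (f : MvPolynomial (Fin n) ℝ) (g : Fin m → MvPolynomial (Fin n) ℝ)
    (hd2 : 2 ≤ d) (hde : Even d) (hdf : f.totalDegree ≤ d)
    (hdg : ∀ j, (g j).totalDegree ≤ d)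
    (hdLeast : ∀ d' : ℕ, Even d' → 2 ≤ d' → f.totalDegree ≤ d' →
      (∀ j, (g j).totalDegree ≤ d') → d ≤ d')
    (gext : Fin (m+1) → MvPolynomial (Fin n) ℝ) (hgext : gext = Fin.cons (-f) g)
    (hO : ∀ j, OmegaSet d (-(gext j)) = DelSet d (-(gext j)))
    (hdagger : ∀ i : Fin n, ∃! k : Fin (m+1),
      (gext k).coeff (Finsupp.single i d) < 0)
    (A : Fin (m+1) → Fin (m+1) → ℝ) (hA : A = fun j k => if j = k then 1 else 0) :
    fAgp d gext A ≤
      sSup ((fun lam => lwGp d (polyG f g lam)) '' {lam : Fin m → ℝ | ∀ j, 0 < lam j}) := by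
  have hf0 : -(eval (0 : Fin n → ℝ) (hpoly gext A 0)) = eval (0 : Fin n → ℝ) f := by
    rw [hpoly_id gext hA, hgext]
    simp
  rw [le_sSup_iff]
  intro b hb
  unfold fAgp rhoA
  rcases Set.eq_empty_or_nonempty
      {t : ((Fin n →₀ ℕ) → Fin n → ℝ) × ((Fin n →₀ ℕ) → ℝ) × (Fin m → ℝ) |
        Lw2Feas d gext A t.1 t.2.1 t.2.2} with hT | hT
  · rw [hT]
    simp [EReal.sub_top]
  · obtain ⟨pt, hpt⟩ := hT
    have hkey : ∀ pt : ((Fin n →₀ ℕ) → Fin n → ℝ) × ((Fin n →₀ ℕ) → ℝ) × (Fin m → ℝ),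
        Lw2Feas d gext A pt.1 pt.2.1 pt.2.2 →
        ((eval (0 : Fin n → ℝ) f - lw2Obj d gext A pt.1 pt.2.1 pt.2.2 : ℝ) : EReal) ≤ b := by
      intro pt' hpt'
      refine le_trans (key_lemma hd2 hde hgext hO hA _ _ _ hpt') (hb ?_)
      exact ⟨pt'.2.2, fun j => hpt'.1 j, rfl⟩
    induction b using EReal.rec with
    | bot =>
      exact absurd (hkey pt hpt) (fun h => EReal.coe_ne_bot _ (le_bot_iff.mp h))
    | top => exact le_top
    | coe b =>
      have hlb : ((eval (0 : Fin n → ℝ) f - b : ℝ) : EReal) ≤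
          sInf ((fun t : ((Fin n →₀ ℕ) → Fin n → ℝ) × ((Fin n →₀ ℕ) → ℝ) × (Fin m → ℝ) =>
              ((lw2Obj d gext A t.1 t.2.1 t.2.2 : ℝ) : EReal)) ''
            {t | Lw2Feas d gext A t.1 t.2.1 t.2.2}) := by
        apply le_sInf
        rintro x ⟨pt', hpt', rfl⟩
        have h := hkey pt' hpt'
        rw [EReal.coe_le_coe_iff] at h ⊢
        linarith
      rw [hf0]
      calc ((eval (0 : Fin n → ℝ) f : ℝ) : EReal) - _
          ≤ ((eval (0 : Fin n → ℝ) f : ℝ) : EReal)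
            - ((eval (0 : Fin n → ℝ) f - b : ℝ) : EReal) :=
            EReal.sub_le_sub (le_refl _) hlb
        _ = ((b : ℝ) : EReal) := by
            rw [← EReal.coe_sub]
            norm_num
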